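/- Let M be an m×m complex matrix, S an m×m non-negative real matrix with |M(b,c)| ≤ S(b,c) - (1/2)ρ·1_{c=c_0} for all b,c (for a fixed column c_0 and some ρ ∈ [0,1]), and let x ∈ ℝ^m be a strictly positive vector. Then for every b, ∑_c |M(b,c)| x_c ≤ (1 - c₂·ψ(x)·ρ) · (S x)_b, where ψ(x) = (min_j x_j)/(max_j x_j) and c₂ = 1/(2m·max_{i,j} S(i,j)). -/

import Mathlib

open Matrix

theorem contraction_estimate {m : ℕ} (hm : 0 < m)
    (M : Matrix (Fin m) (Fin m) ℂ) (S : Matrix (Fin m) (Fin m) ℝ)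
    (hS : ∀ i j, 0 < S i j) (c₀ : Fin m) (ρ : ℝ) (hρ : ρ ∈ Set.Icc (0 : ℝ) 1)
    (hM : ∀ b c, ‖M b c‖ ≤ S b c - (1 / 2) * ρ * (if c = c₀ then 1 else 0))
    (x : Fin m → ℝ) (hx : ∀ j, 0 < x j) :
    ∀ b, (∑ c, ‖M b c‖ * x c) ≤
      (1 - (1 / (2 * m * (⨆ i, ⨆ j, S i j))) * ((⨅ j, x j) / (⨆ j, x j)) * ρ) *
        (S *ᵥ x) b := by
  haveI : Nonempty (Fin m) := Fin.pos_iff_nonempty.mp hm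
  intro b
  set A := ⨆ i, ⨆ j, S i j with hA
  set xmax := ⨆ j, x j with hxm
  set xmin := ⨅ j, x j with hxn
  have hbdd : ∀ (f : Fin m → ℝ), BddAbove (Set.range f) := fun f =>
    (Set.finite_range f).bddAbove
  have hbddb : ∀ (f : Fin m → ℝ), BddBelow (Set.range f) := fun f =>
    (Set.finite_range f).bddBelow
  have hSA : ∀ i j, S i j ≤ A := fun i j =>
    le_trans (le_ciSup (hbdd _) j) (le_ciSup (f := fun i => ⨆ j, S i j) (hbdd _) i)
  have hA0 : 0 < A := lt_of_lt_of_le (hS ⟨0, hm⟩ ⟨0, hm⟩) (hSA _ _)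
  have hxmax : ∀ j, x j ≤ xmax := fun j => le_ciSup (hbdd _) j
  have hxmin : ∀ j, xmin ≤ x j := fun j => ciInf_le (hbddb _) j
  have hxmax0 : 0 < xmax := lt_of_lt_of_le (hx ⟨0, hm⟩) (hxmax _)
  have hxmin0 : 0 < xmin := by
    obtain ⟨j, hj⟩ := Finite.exists_min x
    have : xmin = ⨅ j, x j := rfl
    have h2 : x j ≤ xmin := le_ciInf hj
    exact lt_of_lt_of_le (hx j) h2
  have hSxnn : 0 ≤ (S *ᵥ x) b := by
    rw [mulVec, dotProduct]
    exact Finset.sum_nonneg fun c _ => mul_nonneg (hS b c).le (hx c).le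
  have h1 : (∑ c, ‖M b c‖ * x c) ≤ (S *ᵥ x) b - (1 / 2) * ρ * x c₀ := by
    calc (∑ c, ‖M b c‖ * x c)
        ≤ ∑ c, (S b c - (1 / 2) * ρ * (if c = c₀ then 1 else 0)) * x c :=
          Finset.sum_le_sum fun c _ => mul_le_mul_of_nonneg_right (hM b c) (hx c).le
      _ = (S *ᵥ x) b - (1 / 2) * ρ * x c₀ := by
          simp [mulVec, dotProduct, sub_mul, Finset.sum_sub_distrib, ite_mul,
            Finset.sum_ite_eq', mul_assoc]
  have hSxub : (S *ᵥ x) b ≤ m * A * xmax := by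
    calc (S *ᵥ x) b = ∑ c, S b c * x c := by rw [mulVec, dotProduct]
      _ ≤ ∑ _c : Fin m, A * xmax :=
          Finset.sum_le_sum fun c _ =>
            mul_le_mul (hSA b c) (hxmax c) (hx c).le hA0.le
      _ = m * A * xmax := by
          simp [Finset.sum_const, Finset.card_univ]
          ring
  have hρ0 : 0 ≤ ρ := hρ.1
  have hm' : (0 : ℝ) < m := by exact_mod_cast hm
  have key : (1 / (2 * m * A)) * (xmin / xmax) * ρ * (S *ᵥ x) b ≤ (1 / 2) * ρ * x c₀ := by
    have hc2 : 0 ≤ (1 / (2 * m * A)) * (xmin / xmax) * ρ :=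
      mul_nonneg (mul_nonneg (by positivity) (by positivity)) hρ0
    calc (1 / (2 * m * A)) * (xmin / xmax) * ρ * (S *ᵥ x) b
        ≤ (1 / (2 * m * A)) * (xmin / xmax) * ρ * (m * A * xmax) :=
          mul_le_mul_of_nonneg_left hSxub hc2
      _ = (1 / 2) * ρ * xmin := by
          field_simp
      _ ≤ (1 / 2) * ρ * x c₀ := by
          apply mul_le_mul_of_nonneg_left (hxmin c₀)
          positivity
  nlinarith [h1, key]
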